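/- For any field k and any nonzero polynomial f ∈ k[x] of degree n with leading coefficient a_n, the duplicant dupl(f) := a_n² · tol(f) is a nonzero element of k (i.e., the element dupl(f) of the algebraic closure lies in the image of k and is nonzero). -/

import Mathlib

open Polynomial
open scoped Classical

/-- The tolerant of a polynomial `f` over a field `K` (intended: `K` an algebraic closure and
`f` the image of a polynomial over a subfield): writing `f = a_n ∏ (X - r_i)^{m_i}` with
`r_1, …, r_s` distinct, `tol f = a_n^{2n-2} ∏_{i<j} (r_i - r_j)^{2 m_i m_j}`.  The product is
taken over unordered pairs of distinct roots; this is well defined since the exponents are even. -/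
noncomputable def tol {K : Type*} [Field K] (f : K[X]) : K :=
  f.leadingCoeff ^ (2 * (f.natDegree : ℤ) - 2) *
    ∏ p ∈ f.roots.toFinset.sym2.filter (fun p => ¬ p.IsDiag),
      Sym2.lift ⟨fun a b => ((a - b) ^ 2) ^ (f.rootMultiplicity a * f.rootMultiplicity b),
        fun a b => by
          dsimp only
          rw [mul_comm (rootMultiplicity a f), show (a - b) ^ 2 = (b - a) ^ 2 by ring]⟩ p

/-- The duplicant of `f` is `dupl f = a_n^{2n} ∏_{i<j} (r_i - r_j)^{2 m_i m_j} = a_n² · tol f`. -/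
noncomputable def dupl {K : Type*} [Field K] (f : K[X]) : K :=
  f.leadingCoeff ^ 2 * tol f

section Aux

variable {k : Type*} [Field k]

/-- An element of the algebraic closure that is separable over `k` and fixed by all
`k`-automorphisms lies in (the image of) `k`. -/
theorem DuplAux.fixed_descent (x : AlgebraicClosure k) (hsep : IsSeparable k x)
    (hfix : ∀ σ : AlgebraicClosure k ≃ₐ[k] AlgebraicClosure k, σ x = x) :
    x ∈ (algebraMap k (AlgebraicClosure k)).range := by
  have hint : IsIntegral k x := Algebra.IsIntegral.isIntegral x
  rw [← minpoly.natDegree_eq_one_iff]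
  have hsplit : Splits ((minpoly k x).map (algebraMap k (AlgebraicClosure k))) :=
    IsAlgClosed.splits _
  have hcard : (minpoly k x).natDegree =
      Multiset.card ((minpoly k x).map (algebraMap k (AlgebraicClosure k))).roots := by
    rw [← natDegree_map (algebraMap k (AlgebraicClosure k))]
    exact hsplit.natDegree_eq_card_roots
  have hroots : ∀ y ∈ ((minpoly k x).map (algebraMap k (AlgebraicClosure k))).roots,
      y ∈ ({x} : Multiset (AlgebraicClosure k)) := by
    intro y hy
    have h0 : (aeval y) (minpoly k x) = 0 := by
      rw [aeval_def, ← eval_map]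
      exact (isRoot_of_mem_roots hy)
    obtain ⟨σ, hσ⟩ := minpoly.exists_algEquiv_of_root' (Algebra.IsAlgebraic.isAlgebraic x) h0
    simp [← hσ, hfix σ]
  have hnodup : ((minpoly k x).map (algebraMap k (AlgebraicClosure k))).roots.Nodup :=
    nodup_roots (Polynomial.Separable.map hsep)
  have hle : Multiset.card ((minpoly k x).map (algebraMap k (AlgebraicClosure k))).roots ≤ 1 := by
    have := Multiset.card_le_card ((Multiset.le_iff_subset hnodup).mpr hroots)
    simpa using this
  have h1 := minpoly.natDegree_pos hint
  omega

/-- Divisibility of root multiplicities in `f.map (algebraMap)`, deduced from divisibility of the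
root multiplicity in (the image of) the minimal polynomial. -/
theorem DuplAux.dvd_rootMult_aux (r : AlgebraicClosure k) (m : ℕ)
    (hm : m ∣ rootMultiplicity r ((minpoly k r).map (algebraMap k (AlgebraicClosure k)))) :
    ∀ (n : ℕ) (f : k[X]), f.natDegree ≤ n → f ≠ 0 →
      m ∣ rootMultiplicity r (f.map (algebraMap k (AlgebraicClosure k))) := by
  intro n
  induction n with
  | zero =>
    intro f hdeg hf0
    have hc : f = C (f.coeff 0) := eq_C_of_natDegree_le_zero hdeg
    have : ¬ (f.map (algebraMap k (AlgebraicClosure k))).IsRoot r := by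
      intro h
      rw [hc, map_C, IsRoot, eval_C, _root_.map_eq_zero] at h
      exact hf0 (by rw [hc, h, map_zero])
    rw [rootMultiplicity_eq_zero this]
    exact dvd_zero m
  | succ n ih =>
    intro f hdeg hf0
    by_cases hr : (f.map (algebraMap k (AlgebraicClosure k))).IsRoot r
    · have h0 : aeval r f = 0 := by rwa [aeval_def, ← eval_map]
      have hdvd : minpoly k r ∣ f := minpoly.dvd k r h0
      obtain ⟨g, rfl⟩ := hdvd
      have hint : IsIntegral k r := Algebra.IsIntegral.isIntegral r
      have hg0 : g ≠ 0 := by rintro rfl; simp at hf0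
      have hmp0 : minpoly k r ≠ 0 := minpoly.ne_zero hint
      have hmul : (minpoly k r * g).map (algebraMap k (AlgebraicClosure k)) =
          (minpoly k r).map (algebraMap k (AlgebraicClosure k)) *
            g.map (algebraMap k (AlgebraicClosure k)) :=
        Polynomial.map_mul _
      rw [hmul, rootMultiplicity_mul (by
        rw [← hmul]
        exact (Polynomial.map_ne_zero_iff
          (algebraMap k (AlgebraicClosure k)).injective).mpr hf0)]
      refine dvd_add hm (ih g ?_ hg0)
      have := natDegree_mul hmp0 hg0
      have hpos := minpoly.natDegree_pos hint
      omega
    · rw [rootMultiplicity_eq_zero hr]; exact dvd_zero m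

/-- For any `r` in the algebraic closure there is `n` such that `r ^ q ^ n` is separable over `k`
and `q ^ n` divides the multiplicity of `r` as a root of the image of any nonzero `f ∈ k[x]`. -/
theorem DuplAux.root_pow_sep_dvd (r : AlgebraicClosure k) {q : ℕ} [ExpChar k q] :
    ∃ n : ℕ, IsSeparable k (r ^ q ^ n) ∧
      ∀ f : k[X], f ≠ 0 →
        q ^ n ∣ rootMultiplicity r (f.map (algebraMap k (AlgebraicClosure k))) := by
  haveI : ExpChar (AlgebraicClosure k) q :=
    expChar_of_injective_algebraMap (algebraMap k (AlgebraicClosure k)).injective q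
  have hint : IsIntegral k r := Algebra.IsIntegral.isIntegral r
  obtain ⟨g, hgsep, n, hexp⟩ := (minpoly.irreducible hint).hasSeparableContraction q
  refine ⟨n, ?_, ?_⟩
  · have h0 : aeval (r ^ q ^ n) g = 0 := by
      rw [← expand_aeval (q ^ n) g r, hexp, minpoly.aeval]
    exact hgsep.of_dvd (minpoly.dvd k _ h0)
  · have hdvd : q ^ n ∣
        rootMultiplicity r ((minpoly k r).map (algebraMap k (AlgebraicClosure k))) := by
      rw [← hexp, map_expand, rootMultiplicity_expand_pow]
      exact dvd_mul_right _ _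
    exact fun f hf => DuplAux.dvd_rootMult_aux r (q ^ n) hdvd f.natDegree f le_rfl hf

/-- Each pair factor appearing in the tolerant is separable over `k`. -/
theorem DuplAux.pair_mem (f : k[X]) (hf : f ≠ 0) (r s : AlgebraicClosure k) :
    ((r - s) ^ 2) ^ (rootMultiplicity r (f.map (algebraMap k (AlgebraicClosure k))) *
        rootMultiplicity s (f.map (algebraMap k (AlgebraicClosure k)))) ∈
      separableClosure k (AlgebraicClosure k) := by
  obtain ⟨q, hq⟩ := ExpChar.exists k
  haveI := hq
  haveI : ExpChar (AlgebraicClosure k) q :=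
    expChar_of_injective_algebraMap (algebraMap k (AlgebraicClosure k)).injective q
  obtain ⟨nr, hrsep, hrdvd⟩ := DuplAux.root_pow_sep_dvd (k := k) r (q := q)
  obtain ⟨ns, hssep, hsdvd⟩ := DuplAux.root_pow_sep_dvd (k := k) s (q := q)
  obtain ⟨a, ha⟩ := hrdvd f hf
  obtain ⟨b, hb⟩ := hsdvd f hf
  have key : ((r - s) ^ 2) ^ (rootMultiplicity r (f.map (algebraMap k (AlgebraicClosure k))) *
        rootMultiplicity s (f.map (algebraMap k (AlgebraicClosure k))))
      = ((r ^ q ^ nr) ^ q ^ ns - (s ^ q ^ ns) ^ q ^ nr) ^ (2 * a * b) := by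
    have e1 : (r ^ q ^ nr) ^ q ^ ns = r ^ q ^ (nr + ns) := by
      rw [← pow_mul, ← pow_add]
    have e2 : (s ^ q ^ ns) ^ q ^ nr = s ^ q ^ (nr + ns) := by
      rw [← pow_mul, ← pow_add, add_comm ns nr]
    rw [ha, hb, e1, e2, ← sub_pow_expChar_pow (p := q), ← pow_mul, ← pow_mul]
    congr 1
    rw [pow_add]
    ring
  rw [key]
  refine pow_mem (sub_mem (pow_mem ?_ _) (pow_mem ?_ _)) _
  · exact mem_separableClosure_iff.mpr hrsep
  · exact mem_separableClosure_iff.mpr hssep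

/-- The duplicant of the image of a nonzero `f ∈ k[x]` is separable over `k`. -/
theorem DuplAux.dupl_mem_sep (f : k[X]) (hf : f ≠ 0) :
    dupl (f.map (algebraMap k (AlgebraicClosure k))) ∈
      separableClosure k (AlgebraicClosure k) := by
  have hlc : (f.map (algebraMap k (AlgebraicClosure k))).leadingCoeff ∈
      separableClosure k (AlgebraicClosure k) := by
    rw [leadingCoeff_map]
    exact (separableClosure k (AlgebraicClosure k)).algebraMap_mem _
  refine mul_mem (pow_mem hlc 2) (mul_mem ?_ ?_)
  · exact Subfield.zpow_mem (separableClosure k (AlgebraicClosure k)).toSubfield hlc _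
  · refine IntermediateField.prod_mem _ fun p hp => ?_
    induction p with
    | _ a b => simpa using DuplAux.pair_mem f hf a b

theorem DuplAux.dupl_ne_zero (f : k[X]) (hf : f ≠ 0) :
    dupl (f.map (algebraMap k (AlgebraicClosure k))) ≠ 0 := by
  have hmne : f.map (algebraMap k (AlgebraicClosure k)) ≠ 0 :=
    (Polynomial.map_ne_zero_iff (algebraMap k (AlgebraicClosure k)).injective).mpr hf
  have hlc : (f.map (algebraMap k (AlgebraicClosure k))).leadingCoeff ≠ 0 :=
    leadingCoeff_ne_zero.mpr hmne
  refine mul_ne_zero (pow_ne_zero _ hlc) (mul_ne_zero (zpow_ne_zero _ hlc) ?_)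
  rw [Finset.prod_ne_zero_iff]
  intro p hp
  induction p with
  | _ a b =>
    simp only [Finset.mem_filter, Sym2.isDiag_iff_proj_eq] at hp
    have hab : a ≠ b := fun h => hp.2 (by simp [h])
    rw [Sym2.lift_mk]
    exact pow_ne_zero _ (pow_ne_zero 2 (sub_ne_zero.mpr hab))

/-- The tolerant commutes with automorphisms of an algebraically closed field. -/
theorem DuplAux.tol_map {K : Type*} [Field K] [IsAlgClosed K] (e : K ≃+* K) (g : K[X]) :
    tol (g.map (e : K →+* K)) = e (tol g) := by
  have hsplits : Splits g := IsAlgClosed.splits g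
  have hroots : (g.map (e : K →+* K)).roots = g.roots.map e := hsplits.roots_map _
  have hmult : ∀ a : K, rootMultiplicity (e a) (g.map (e : K →+* K)) = rootMultiplicity a g := by
    intro a
    rw [← count_roots, hroots, Multiset.count_map_eq_count' _ _ e.injective, count_roots]
  have hfin : (g.map (e : K →+* K)).roots.toFinset = g.roots.toFinset.image e := by
    rw [hroots, Multiset.toFinset_map]
  unfold tol
  rw [map_mul, map_zpow₀, leadingCoeff_map, natDegree_map, hfin, map_prod]
  congr 1
  refine (Finset.prod_nbij' (fun p => Sym2.map e p) (fun p => Sym2.map e.symm p)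
    ?_ ?_ ?_ ?_ ?_).symm
  · intro p hp
    induction p with
    | _ a b =>
      simp only [Finset.mem_filter, Finset.mem_sym2_iff, Sym2.mem_iff, Sym2.map_pair_eq,
        Sym2.isDiag_iff_proj_eq] at hp ⊢
      refine ⟨fun x hx => ?_, fun h => hp.2 (e.injective h)⟩
      rcases hx with rfl | rfl
      · exact Finset.mem_image_of_mem _ (hp.1 a (Or.inl rfl))
      · exact Finset.mem_image_of_mem _ (hp.1 b (Or.inr rfl))
  · intro p hp
    induction p with
    | _ a b =>
      simp only [Finset.mem_filter, Finset.mem_sym2_iff, Sym2.mem_iff, Sym2.map_pair_eq,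
        Sym2.isDiag_iff_proj_eq] at hp ⊢
      refine ⟨fun x hx => ?_, fun h => hp.2 ?_⟩
      · rcases hx with rfl | rfl
        · obtain ⟨y, hy, rfl⟩ := Finset.mem_image.mp (hp.1 a (Or.inl rfl))
          simpa using hy
        · obtain ⟨y, hy, rfl⟩ := Finset.mem_image.mp (hp.1 b (Or.inr rfl))
          simpa using hy
      · simpa using congrArg e h
  · intro p _
    induction p with
    | _ a b => simp
  · intro p _
    induction p with
    | _ a b => simp
  · intro p hp
    induction p with
    | _ a b =>
      simp only [Sym2.map_pair_eq, Sym2.lift_mk, map_pow, map_sub, hmult]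

/-- The duplicant commutes with automorphisms of an algebraically closed field. -/
theorem DuplAux.dupl_map {K : Type*} [Field K] [IsAlgClosed K] (e : K ≃+* K) (g : K[X]) :
    dupl (g.map (e : K →+* K)) = e (dupl g) := by
  unfold dupl
  rw [leadingCoeff_map, map_mul, map_pow, DuplAux.tol_map]
  rfl

end Aux

/-- Rationality of the duplicant: for any field `k` and nonzero `f ∈ k[x]`, the duplicant
`dupl f = a_n² · tol f` is the image of a nonzero element of `k`. -/
theorem dupl_rational {k : Type*} [Field k] (f : k[X]) (hf : f ≠ 0) :
    ∃ c : k, c ≠ 0 ∧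
      algebraMap k (AlgebraicClosure k) c = dupl (f.map (algebraMap k (AlgebraicClosure k))) := by
  set F := f.map (algebraMap k (AlgebraicClosure k)) with hF
  have hsep : IsSeparable k (dupl F) :=
    mem_separableClosure_iff.mp (DuplAux.dupl_mem_sep f hf)
  have hfix : ∀ σ : AlgebraicClosure k ≃ₐ[k] AlgebraicClosure k, σ (dupl F) = dupl F := by
    intro σ
    have hmap : F.map (σ.toRingEquiv : AlgebraicClosure k →+* AlgebraicClosure k) = F := by
      rw [hF, map_map]
      congr 1
      ext x
      simp
    have := DuplAux.dupl_map σ.toRingEquiv F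
    rw [hmap] at this
    exact (this.symm.trans rfl)
  obtain ⟨c, hc⟩ := DuplAux.fixed_descent (dupl F) hsep hfix
  refine ⟨c, ?_, hc⟩
  rintro rfl
  rw [map_zero] at hc
  exact DuplAux.dupl_ne_zero f hf hc.symm
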